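/- Let M be a semigroup, let N = M ∪ {I} be the monoid obtained by adjoining a new identity element I, and assume N is finite J-above. Then for a map f : N → ℕ the following are equivalent: (a) f(I) = 0 and f(b) ≤ f(a·b·c) for all a, b, c ∈ N (f is ≤_J-preserving); (b) there exists a map w : N → ℕ with w(I) = 0 which is constant on J-classes (a J b implies w(a) = w(b)), such that for every m ∈ N, f(m) = max{ Σ_{i=0}^n w(m_i) | m = m_n <_J ⋯ <_J m_1 <_J m_0 = I is a chain in N }. -/

import Mathlib

namespace Stmt11

variable {N : Type*} [Monoid N]

/-- `a ≤_J b`. -/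
def jle (a b : N) : Prop := ∃ u v, a = u * b * v

/-- `a J b`. -/
def jrel (a b : N) : Prop := jle a b ∧ jle b a

/-- `a <_J b`. -/
def jlt (a b : N) : Prop := jle a b ∧ ¬ jle b a

end Stmt11

namespace Stmt11Aux
open Stmt11
variable {N : Type*} [Monoid N]

lemma jle_refl (a : N) : jle a a := ⟨1, 1, by simp⟩

lemma jle_trans {a b c : N} (h1 : jle a b) (h2 : jle b c) : jle a c := by
  obtain ⟨u, v, rfl⟩ := h1; obtain ⟨u', v', rfl⟩ := h2
  exact ⟨u * u', v' * v, by simp [mul_assoc]⟩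

lemma jle_one (a : N) : jle a 1 := ⟨a, 1, by simp⟩

lemma jlt_trans {a b c : N} (h1 : jlt a b) (h2 : jlt b c) : jlt a c :=
  ⟨jle_trans h1.1 h2.1, fun h => h2.2 (jle_trans h h1.1)⟩

lemma jlt_ne {a b : N} (h : jlt a b) : a ≠ b := by rintro rfl; exact h.2 h.1

lemma one_jle_iff {M : Type*} [Semigroup M] {a : WithOne M} : jle (1 : WithOne M) a ↔ a = 1 := by
  constructor
  · rintro ⟨u, v, h⟩
    induction a using WithOne.recOneCoe with
    | one => rfl
    | coe x =>
      exfalso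
      induction u using WithOne.recOneCoe <;> induction v using WithOne.recOneCoe <;>
        simp_all [← WithOne.coe_mul]
  · rintro rfl; exact jle_refl 1

lemma jlt_one {M : Type*} [Semigroup M] {a : WithOne M} (h : a ≠ 1) : jlt a (1 : WithOne M) :=
  ⟨jle_one a, fun hh => h (one_jle_iff.mp hh)⟩

lemma not_jlt_one_left {M : Type*} [Semigroup M] (a : WithOne M) : ¬ jlt (1 : WithOne M) a :=
  fun h => h.2 (jle_one a)

end Stmt11Aux

open Stmt11Aux

open Stmt11 in
/-- For a finite `J`-above monoid `N = M ∪ {I}`, a map `f : N → ℕ` is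
`≤_J`-preserving iff it is of the form `f(m) = max { Σ w(m_i) | m = m_n <_J ⋯ <_J
m_0 = I }` for some weight `w` on the `J`-classes. -/
theorem stmt_11 {M : Type*} [Semigroup M]
    (hfin : ∀ a : WithOne M, {b : WithOne M | jle a b}.Finite)
    (f : WithOne M → ℕ) :
    (f 1 = 0 ∧ ∀ a b c : WithOne M, f b ≤ f (a * b * c)) ↔
    (∃ w : WithOne M → ℕ, w 1 = 0 ∧
      (∀ a b : WithOne M, jrel a b → w a = w b) ∧
      ∀ m : WithOne M, f m =
        sSup { s : ℕ | ∃ c : List (WithOne M), c.Chain' jlt ∧ c.head? = some m ∧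
          c.getLast? = some 1 ∧ s = (c.map w).sum }) := by
  classical
  haveI : IsTrans (WithOne M) jlt := ⟨fun _ _ _ => jlt_trans⟩
  constructor
  · rintro ⟨hf1, hmono⟩
    have hanti : ∀ {a b : WithOne M}, jle a b → f b ≤ f a := by
      rintro a b ⟨u, v, rfl⟩; exact hmono u b v
    set g : WithOne M → ℕ :=
      fun m => ((hfin m).toFinset.filter (fun x => jlt m x)).sup f with hg
    set w : WithOne M → ℕ := fun m => f m - g m with hw
    have hmemfil : ∀ m x : WithOne M,
        x ∈ (hfin m).toFinset.filter (fun x => jlt m x) ↔ jlt m x := by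
      intro m x
      simp only [Finset.mem_filter, Set.Finite.mem_toFinset, Set.mem_setOf_eq]
      exact ⟨fun h => h.2, fun h => ⟨h.1, h⟩⟩
    have hg_le : ∀ m, g m ≤ f m := by
      intro m
      exact Finset.sup_le fun x hx => hanti ((hmemfil m x).mp hx).1
    have hwg : ∀ m, w m + g m = f m := fun m => Nat.sub_add_cancel (hg_le m)
    have hg1 : g 1 = 0 := by
      have hemp : ((hfin (1 : WithOne M)).toFinset.filter (fun x => jlt 1 x)) = ∅ := by
        apply Finset.eq_empty_of_forall_notMem
        intro x hx
        exact not_jlt_one_left x ((hmemfil 1 x).mp hx)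
      show ((hfin (1 : WithOne M)).toFinset.filter (fun x => jlt 1 x)).sup f = 0
      rw [hemp]; rfl
    have hw1 : w 1 = f 1 := by
      show f 1 - g 1 = f 1
      rw [hg1]; omega
    have hJ : ∀ a b : WithOne M, jrel a b → w a = w b := by
      intro a b hab
      have hfa : f a = f b := le_antisymm (hanti hab.2) (hanti hab.1)
      have hfilter : (hfin a).toFinset.filter (fun x => jlt a x)
          = (hfin b).toFinset.filter (fun x => jlt b x) := by
        apply Finset.ext
        intro x
        rw [hmemfil, hmemfil]
        constructor
        · intro h
          exact ⟨jle_trans hab.2 h.1, fun hh => h.2 (jle_trans hh hab.2)⟩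
        · intro h
          exact ⟨jle_trans hab.1 h.1, fun hh => h.2 (jle_trans hh hab.1)⟩
      have hga : g a = g b := by
        show ((hfin a).toFinset.filter (fun x => jlt a x)).sup f
          = ((hfin b).toFinset.filter (fun x => jlt b x)).sup f
        rw [hfilter]
      show f a - g a = f b - g b
      rw [hfa, hga]
    -- upper bound: every chain sum is ≤ f of the head
    have key : ∀ c : List (WithOne M), c.Chain' jlt → c.getLast? = some 1 →
        ∀ a, c.head? = some a → (c.map w).sum ≤ f a := by
      intro c
      induction c with
      | nil => simp
      | cons x t ih =>
        intro hc hl a ha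
        obtain rfl : x = a := by simpa using ha
        cases t with
        | nil =>
          obtain rfl : x = 1 := by simpa using hl
          simp [hw1]
        | cons y t' =>
          have hchain := List.isChain_cons_cons.mp hc
          have hrest : ((y :: t').map w).sum ≤ f y :=
            ih hchain.2 (by simpa [List.getLast?_cons_cons] using hl) y rfl
          have hfy : f y ≤ g x :=
            Finset.le_sup ((hmemfil x y).mpr hchain.1)
          calc ((x :: y :: t').map w).sum = w x + ((y :: t').map w).sum := by simp
            _ ≤ w x + g x := by omega
            _ = f x := hwg x
    -- greedy chain achieving f m
    have greedy : ∀ n : ℕ, ∀ m : WithOne M, (hfin m).toFinset.card ≤ n →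
        ∃ c : List (WithOne M), c.Chain' jlt ∧ c.head? = some m ∧
          c.getLast? = some 1 ∧ (c.map w).sum = f m := by
      intro n
      induction n with
      | zero =>
        intro m hm
        exfalso
        have hmem : m ∈ (hfin m).toFinset := by
          rw [Set.Finite.mem_toFinset]; exact jle_refl m
        have := Finset.card_pos.mpr ⟨m, hmem⟩
        omega
      | succ n ih =>
        intro m hm
        by_cases h1 : m = 1
        · subst h1
          exact ⟨[1], List.isChain_singleton _, rfl, rfl, by simp [hw1]⟩
        · have h1' : (1 : WithOne M) ∈ (hfin m).toFinset.filter (fun x => jlt m x) :=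
            (hmemfil m 1).mpr (jlt_one h1)
          obtain ⟨x, hx, hfx⟩ :=
            Finset.exists_mem_eq_sup ((hfin m).toFinset.filter (fun x => jlt m x)) ⟨1, h1'⟩ f
          have hmx : jlt m x := (hmemfil m x).mp hx
          have hsub : (hfin x).toFinset ⊂ (hfin m).toFinset := by
            constructor
            · intro y hy
              rw [Set.Finite.mem_toFinset] at hy ⊢
              exact jle_trans hmx.1 hy
            · intro hcon
              have hmem : m ∈ (hfin x).toFinset := hcon (by
                rw [Set.Finite.mem_toFinset]; exact jle_refl m)
              rw [Set.Finite.mem_toFinset] at hmem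
              exact hmx.2 hmem
          have hcard : (hfin x).toFinset.card ≤ n := by
            have := Finset.card_lt_card hsub
            omega
          obtain ⟨c, hc, hch, hcl, hcs⟩ := ih x hcard
          refine ⟨m :: c, List.IsChain.cons hc ?_, rfl, ?_, ?_⟩
          · intro y hy
            rw [hch] at hy
            obtain rfl : x = y := by simpa using hy
            exact hmx
          · cases c with
            | nil => simp at hch
            | cons z t => simpa [List.getLast?_cons_cons] using hcl
          · have hgx : g m = f x := hfx
            calc ((m :: c).map w).sum = w m + (c.map w).sum := by simp
              _ = w m + g m := by rw [hcs, hgx]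
              _ = f m := hwg m
    refine ⟨w, by rw [hw1]; exact hf1, hJ, fun m => ?_⟩
    obtain ⟨c, hc, hch, hcl, hcs⟩ := greedy (hfin m).toFinset.card m le_rfl
    have hmem : f m ∈ { s : ℕ | ∃ c : List (WithOne M), c.Chain' jlt ∧ c.head? = some m ∧
          c.getLast? = some 1 ∧ s = (c.map w).sum } := ⟨c, hc, hch, hcl, hcs.symm⟩
    have hub : ∀ s ∈ { s : ℕ | ∃ c : List (WithOne M), c.Chain' jlt ∧ c.head? = some m ∧
          c.getLast? = some 1 ∧ s = (c.map w).sum }, s ≤ f m := by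
      rintro s ⟨c', hc', hch', hcl', rfl⟩
      exact key c' hc' hcl' m hch'
    exact le_antisymm (le_csSup ⟨f m, hub⟩ hmem) (csSup_le ⟨f m, hmem⟩ hub)
  · rintro ⟨w, hw1, hJ, hf⟩
    -- general bddAbove
    have bdd : ∀ m : WithOne M, BddAbove { s : ℕ | ∃ c : List (WithOne M), c.Chain' jlt ∧
        c.head? = some m ∧ c.getLast? = some 1 ∧ s = (c.map w).sum } := by
      intro m
      refine ⟨∑ x ∈ (hfin m).toFinset, w x, ?_⟩
      rintro s ⟨c, hc, hch, hcl, rfl⟩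
      have hpw : c.Pairwise jlt := List.isChain_iff_pairwise.mp hc
      have hnd : c.Nodup := hpw.imp jlt_ne
      have hsubc : c.toFinset ⊆ (hfin m).toFinset := by
        intro x hx
        rw [List.mem_toFinset] at hx
        rw [Set.Finite.mem_toFinset]
        cases c with
        | nil => simp at hch
        | cons z t =>
          obtain rfl : z = m := by simpa using hch
          rcases List.mem_cons.mp hx with rfl | hx
          · exact jle_refl x
          · exact ((List.pairwise_cons.mp hpw).1 x hx).1
      calc (c.map w).sum = ∑ x ∈ c.toFinset, w x := (List.sum_toFinset w hnd).symm
        _ ≤ ∑ x ∈ (hfin m).toFinset, w x := Finset.sum_le_sum_of_subset hsubc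
    constructor
    · rw [hf 1]
      have hempty : { s : ℕ | ∃ c : List (WithOne M), c.Chain' jlt ∧ c.head? = some 1 ∧
          c.getLast? = some 1 ∧ s = (c.map w).sum } = {0} := by
        apply Set.eq_singleton_iff_unique_mem.mpr
        constructor
        · exact ⟨[1], List.isChain_singleton _, rfl, rfl, by simp [hw1]⟩
        · rintro s ⟨c, hc, hch, hcl, rfl⟩
          cases c with
          | nil => simp at hch
          | cons z t =>
            obtain rfl : z = 1 := by simpa using hch
            cases t with
            | nil => simp [hw1]
            | cons y t' =>
              exact absurd (List.isChain_cons_cons.mp hc).1 (not_jlt_one_left y)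
      rw [hempty, csSup_singleton]
    · intro a b c
      rw [hf b, hf (a * b * c)]
      set m' := a * b * c with hm'
      have hm'b : jle m' b := ⟨a, c, rfl⟩
      -- transfer chains
      have transfer : ∀ s ∈ { s : ℕ | ∃ c : List (WithOne M), c.Chain' jlt ∧
          c.head? = some b ∧ c.getLast? = some 1 ∧ s = (c.map w).sum },
          ∃ t ∈ { s : ℕ | ∃ c : List (WithOne M), c.Chain' jlt ∧
          c.head? = some m' ∧ c.getLast? = some 1 ∧ s = (c.map w).sum }, s ≤ t := by
        rintro s ⟨c0, hc, hch, hcl, rfl⟩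
        cases c0 with
        | nil => simp at hch
        | cons z t =>
          obtain rfl : z = b := by simpa using hch
          by_cases hbm : jle z m'
          · have hwbm : w m' = w z := hJ m' z ⟨hm'b, hbm⟩
            cases t with
            | nil =>
              have hb1 : z = 1 := by simpa using hcl
              have hm'1 : m' = 1 := one_jle_iff.mp (hb1 ▸ hbm)
              refine ⟨w m', ⟨[m'], List.isChain_singleton _, rfl,
                by simp [hm'1], by simp⟩, ?_⟩
              simp [hwbm]
            | cons y t' =>
              have hby : jlt z y := (List.isChain_cons_cons.mp hc).1
              have hm'y : jlt m' y :=
                ⟨jle_trans hm'b hby.1, fun h => hby.2 (jle_trans h hm'b)⟩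
              refine ⟨_, ⟨m' :: y :: t',
                List.isChain_cons_cons.mpr ⟨hm'y, (List.isChain_cons_cons.mp hc).2⟩, rfl,
                by simpa [List.getLast?_cons_cons] using hcl, rfl⟩, ?_⟩
              simp [hwbm]
          · have h2 : jlt m' z := ⟨hm'b, hbm⟩
            refine ⟨_, ⟨m' :: z :: t, List.isChain_cons_cons.mpr ⟨h2, hc⟩, rfl,
              by simpa [List.getLast?_cons_cons] using hcl, rfl⟩, ?_⟩
            simp only [List.map_cons, List.sum_cons]
            exact Nat.le_add_left _ _
      rcases Set.eq_empty_or_nonempty { s : ℕ | ∃ c : List (WithOne M), c.Chain' jlt ∧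
          c.head? = some b ∧ c.getLast? = some 1 ∧ s = (c.map w).sum } with h | h
      · rw [h, csSup_empty]
        exact bot_le
      · refine csSup_le h fun s hs => ?_
        obtain ⟨t, ht, hst⟩ := transfer s hs
        exact hst.trans (le_csSup (bdd m') ht)
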